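/- Let A₁ = span(e₁∧e₄ + e₂∧e₅, e₁∧e₆ + e₃∧e₅, e₂∧e₆ − e₃∧e₄, e₁∧e₂, e₄∧e₅) and A₂ = span(e₁∧e₄ + e₂∧e₅, e₁∧e₆ + e₃∧e₅, e₂∧e₆ − e₃∧e₄, (e₁−e₅)∧(e₂+e₄), (e₁−e₅)∧(e₃+e₆)) in Λ²W*. Then: (i) the set of elements of A₁ of rank at most 2 equals the cone {λ·(t₀e₁ − t₁e₅)∧(t₀e₂ + t₁e₄) : λ, t₀, t₁ ∈ ℂ}; (ii) the set of elements of A₂ of rank at most 2 is the union of two 2-dimensional linear subspaces of A₂ whose intersection is {0}. -/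

import Mathlib

open Matrix

noncomputable section

abbrev W : Type := Fin 6 → ℂ
abbrev Form : Type := Matrix (Fin 6) (Fin 6) ℂ

/-- The skew-symmetric bilinear form associated to a matrix: `ω(u,v) = uᵀ M v`. -/
def Form.apply (M : Form) (u v : W) : ℂ := u ⬝ᵥ M *ᵥ v

/-- A matrix represents a skew-symmetric (alternating) bilinear form iff `Mᵀ = -M`. -/
def Form.IsSkew (M : Form) : Prop := Mᵀ = -M

/-- Standard basis vectors of `W` (also used as the dual basis of `W*`). -/
def e (i : Fin 6) : Fin 6 → ℂ := Pi.single i 1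

/-- Wedge of two covectors: `(φ∧ψ)(u,u') = φ(u)ψ(u') − ψ(u)φ(u')`. -/
def wedge (φ ψ : Fin 6 → ℂ) : Form := vecMulVec φ ψ - vecMulVec ψ φ

/-- Kernel of the linear map `u ↦ ω(u,·)`, i.e. of `u ↦ Mᵀ u`. -/
def Form.kernel (M : Form) : Submodule ℂ W := LinearMap.ker (Matrix.mulVecLin Mᵀ)

/-- The action of `g ∈ GL(W)` on forms: `(g·ω)(u,u') = ω(gu,gu')`, as a linear map on forms. -/
def actLin (g : Matrix (Fin 6) (Fin 6) ℂ) : Form →ₗ[ℂ] Form where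
  toFun M := gᵀ * M * g
  map_add' M N := by simp [add_mul, mul_add]
  map_smul' c M := by simp [mul_smul_comm, smul_mul_assoc]

/-- The geometric criterion for non-stability (Theorem 2.3(2)). -/
def Nonstable (A : Submodule ℂ Form) : Prop :=
  ∃ s : ℕ, s ∈ ({1, 2, 3} : Set ℕ) ∧
    ∃ U U' : Submodule ℂ W, U ≤ U' ∧
      Module.finrank ℂ U = s ∧ Module.finrank ℂ U' = 6 - s ∧
      ∀ M ∈ A, ∀ u ∈ U, ∀ u' ∈ U', Form.apply M u u' = 0

/-- The geometric criterion for non-semistability (Theorem 2.3(1)). -/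
def NonSemistable (A : Submodule ℂ Form) : Prop :=
  ∃ s : ℕ, s ∈ ({1, 2, 3} : Set ℕ) ∧
    ∃ U U' : Submodule ℂ W, U ≤ U' ∧
      Module.finrank ℂ U = s ∧ Module.finrank ℂ U' = 7 - s ∧
      ∀ M ∈ A, ∀ u ∈ U, ∀ u' ∈ U', Form.apply M u u' = 0

/-- The plane `π_g` of general type. -/
def pi_g : Submodule ℂ Form :=
  Submodule.span ℂ {wedge (e 0) (e 3) + wedge (e 1) (e 4),
    wedge (e 0) (e 5) + wedge (e 2) (e 4),
    wedge (e 1) (e 5) - wedge (e 2) (e 3)}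


/-- The first stable 4-dimensional (projective) model. -/
def A1 : Submodule ℂ Form :=
  Submodule.span ℂ {wedge (e 0) (e 3) + wedge (e 1) (e 4),
    wedge (e 0) (e 5) + wedge (e 2) (e 4),
    wedge (e 1) (e 5) - wedge (e 2) (e 3),
    wedge (e 0) (e 1), wedge (e 3) (e 4)}

/-- The second stable 4-dimensional (projective) model. -/
def A2 : Submodule ℂ Form :=
  Submodule.span ℂ {wedge (e 0) (e 3) + wedge (e 1) (e 4),
    wedge (e 0) (e 5) + wedge (e 2) (e 4),
    wedge (e 1) (e 5) - wedge (e 2) (e 3),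
    wedge (e 0 - e 4) (e 1 + e 3),
    wedge (e 0 - e 4) (e 2 + e 5)}

/- ===== auxiliary lemmas ===== -/

lemma ev6_0 {α : Type*} (a0 a1 a2 a3 a4 a5 : α) : ![a0,a1,a2,a3,a4,a5] 0 = a0 := rfl
lemma ev6_1 {α : Type*} (a0 a1 a2 a3 a4 a5 : α) : ![a0,a1,a2,a3,a4,a5] 1 = a1 := rfl
lemma ev6_2 {α : Type*} (a0 a1 a2 a3 a4 a5 : α) : ![a0,a1,a2,a3,a4,a5] 2 = a2 := rfl
lemma ev6_3 {α : Type*} (a0 a1 a2 a3 a4 a5 : α) : ![a0,a1,a2,a3,a4,a5] 3 = a3 := rfl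
lemma ev6_4 {α : Type*} (a0 a1 a2 a3 a4 a5 : α) : ![a0,a1,a2,a3,a4,a5] 4 = a4 := rfl
lemma ev6_5 {α : Type*} (a0 a1 a2 a3 a4 a5 : α) : ![a0,a1,a2,a3,a4,a5] 5 = a5 := rfl
lemma ev3_0 {α : Type*} (a0 a1 a2 : α) : ![a0,a1,a2] 0 = a0 := rfl
lemma ev3_1 {α : Type*} (a0 a1 a2 : α) : ![a0,a1,a2] 1 = a1 := rfl
lemma ev3_2 {α : Type*} (a0 a1 a2 : α) : ![a0,a1,a2] 2 = a2 := rfl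

lemma wedge_smul_left (l : ℂ) (u v : Fin 6 → ℂ) : wedge (l • u) v = l • wedge u v := by
  ext i j; simp [wedge, vecMulVec_apply]; ring

lemma rank_wedge_le (u v : Fin 6 → ℂ) : (wedge u v).rank ≤ 2 := by
  have h : wedge u v = (Matrix.of fun i (k : Fin 2) => if k = 0 then u i else v i) *
      (Matrix.of fun (k : Fin 2) j => if k = 0 then v j else -u j) := by
    ext i j
    simp [wedge, vecMulVec_apply, Matrix.mul_apply, Fin.sum_univ_two]
    ring
  rw [h]
  exact (Matrix.rank_mul_le_left _ _).trans ((Matrix.rank_le_card_width _).trans (by simp))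

lemma rank_submatrix_le' (A : Form) (f g : Fin 3 → Fin 6) : (A.submatrix f g).rank ≤ A.rank := by
  have h : A.submatrix f g =
      ((1 : Form).submatrix f id) * A * ((1 : Form).submatrix id g) := by
    ext i j
    simp [Matrix.mul_apply, Matrix.one_apply, Finset.sum_ite_eq, Finset.sum_ite_eq']
  rw [h]
  exact (Matrix.rank_mul_le_left _ _).trans (Matrix.rank_mul_le_right _ _)

lemma minor_eq_zero {M : Form} (h : M.rank ≤ 2) (f g : Fin 3 → Fin 6) :
    (M.submatrix f g).det = 0 := by
  by_contra hd
  have hu : IsUnit (M.submatrix f g) :=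
    (Matrix.isUnit_iff_isUnit_det _).mpr (isUnit_iff_ne_zero.mpr hd)
  have h1 := Matrix.rank_of_isUnit _ hu
  have h2 := (rank_submatrix_le' M f g).trans h
  rw [h1] at h2
  simp at h2

set_option maxHeartbeats 1000000 in
lemma combo1_eq (a b c d f : ℂ) :
    a • (wedge (e 0) (e 3) + wedge (e 1) (e 4)) +
      (b • (wedge (e 0) (e 5) + wedge (e 2) (e 4)) +
        (c • (wedge (e 1) (e 5) - wedge (e 2) (e 3)) +
          (d • wedge (e 0) (e 1) + f • wedge (e 3) (e 4)))) =
    !![0,d,0,a,0,b; -d,0,0,0,a,c; 0,0,0,-c,b,0; -a,0,c,0,f,0; 0,-a,-b,-f,0,0; -b,-c,0,0,0,0] := by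
  ext i j
  fin_cases i <;> fin_cases j <;>
    first
      | rfl
      | (simp [wedge, vecMulVec_apply, e, Pi.single_apply, ev6_0, ev6_1, ev6_2, ev6_3, ev6_4,
          ev6_5]; try ring; try rfl)

lemma param_expand (l t0 t1 : ℂ) :
    l • wedge (t0 • e 0 - t1 • e 4) (t0 • e 1 + t1 • e 3) =
      (l*(t0*t1)) • (wedge (e 0) (e 3) + wedge (e 1) (e 4)) +
        ((l*(t0*t0)) • wedge (e 0) (e 1) + (l*(t1*t1)) • wedge (e 3) (e 4)) := by
  ext i j
  simp [wedge, vecMulVec_apply]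
  ring

lemma p4_eq : wedge (e 0 + e 4) (e 1 - e 3) =
    wedge (e 0 - e 4) (e 1 + e 3) - (2:ℂ) • (wedge (e 0) (e 3) + wedge (e 1) (e 4)) := by
  ext i j; simp [wedge, vecMulVec_apply]; ring

lemma p5_eq : wedge (e 0 + e 4) (e 2 - e 5) =
    wedge (e 0 - e 4) (e 2 + e 5) - (2:ℂ) • (wedge (e 0) (e 5) + wedge (e 2) (e 4)) := by
  ext i j; simp [wedge, vecMulVec_apply]; ring

lemma L1elt (s t : ℂ) : s • wedge (e 0 - e 4) (e 1 + e 3) + t • wedge (e 0 - e 4) (e 2 + e 5) =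
    wedge (e 0 - e 4) (s • (e 1 + e 3) + t • (e 2 + e 5)) := by
  ext i j; simp [wedge, vecMulVec_apply]; ring

lemma L2elt (s t : ℂ) : s • wedge (e 0 + e 4) (e 1 - e 3) + t • wedge (e 0 + e 4) (e 2 - e 5) =
    wedge (e 0 + e 4) (s • (e 1 - e 3) + t • (e 2 - e 5)) := by
  ext i j; simp [wedge, vecMulVec_apply]; ring

set_option maxHeartbeats 1000000 in
lemma combo2_eq (a b c d f : ℂ) :
    a • (wedge (e 0) (e 3) + wedge (e 1) (e 4)) +
      (b • (wedge (e 0) (e 5) + wedge (e 2) (e 4)) +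
        (c • (wedge (e 1) (e 5) - wedge (e 2) (e 3)) +
          (d • wedge (e 0 - e 4) (e 1 + e 3) + f • wedge (e 0 - e 4) (e 2 + e 5)))) =
    !![0,d,f,d+a,0,f+b; -d,0,0,0,d+a,c; -f,0,0,-c,f+b,0;
       -(d+a),0,c,0,d,0; 0,-(d+a),-(f+b),-d,0,-f; -(f+b),-c,0,0,f,0] := by
  ext i j
  fin_cases i <;> fin_cases j <;>
    first
      | rfl
      | (simp [wedge, vecMulVec_apply, e, Pi.single_apply, ev6_0, ev6_1, ev6_2, ev6_3, ev6_4,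
          ev6_5]; try ring; try rfl)

lemma lin_indep_pair_n :
    LinearIndependent ℂ ![wedge (e 0 - e 4) (e 1 + e 3), wedge (e 0 - e 4) (e 2 + e 5)] := by
  rw [LinearIndependent.pair_iff]
  intro s t hst
  constructor
  · have := congrFun (congrFun hst 0) 1
    simpa [wedge, vecMulVec_apply, e, Pi.single_apply] using this
  · have := congrFun (congrFun hst 0) 2
    simpa [wedge, vecMulVec_apply, e, Pi.single_apply] using this

lemma lin_indep_pair_p :
    LinearIndependent ℂ ![wedge (e 0 + e 4) (e 1 - e 3), wedge (e 0 + e 4) (e 2 - e 5)] := by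
  rw [LinearIndependent.pair_iff]
  intro s t hst
  constructor
  · have := congrFun (congrFun hst 0) 1
    simpa [wedge, vecMulVec_apply, e, Pi.single_apply] using this
  · have := congrFun (congrFun hst 0) 2
    simpa [wedge, vecMulVec_apply, e, Pi.single_apply] using this

lemma span_pair_finrank {x y : Form} (h : LinearIndependent ℂ ![x, y]) :
    Module.finrank ℂ (Submodule.span ℂ {x, y}) = 2 := by
  have hxy : ({x, y} : Set Form) = Set.range ![x, y] := by
    simp [Matrix.range_cons, Matrix.range_empty, Set.pair_comm]
  rw [hxy, finrank_span_eq_card h, Fintype.card_fin]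

set_option maxHeartbeats 1600000 in
theorem statement18 :
    ({M : Form | M ∈ A1 ∧ Matrix.rank M ≤ 2} =
      {M : Form | ∃ l t0 t1 : ℂ,
        M = l • wedge (t0 • e 0 - t1 • e 4) (t0 • e 1 + t1 • e 3)}) ∧
    (∃ L1 L2 : Submodule ℂ Form, L1 ≤ A2 ∧ L2 ≤ A2 ∧
      Module.finrank ℂ L1 = 2 ∧ Module.finrank ℂ L2 = 2 ∧ L1 ⊓ L2 = ⊥ ∧
      {M : Form | M ∈ A2 ∧ Matrix.rank M ≤ 2} = (L1 : Set Form) ∪ (L2 : Set Form)) := by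
  constructor
  · -- Part 1
    ext M
    simp only [Set.mem_setOf_eq]
    constructor
    · rintro ⟨hmem, hrank⟩
      simp only [A1, Submodule.mem_span_insert, Submodule.mem_span_singleton] at hmem
      obtain ⟨a, _, ⟨b, _, ⟨c, _, ⟨d, _, ⟨f, rfl⟩, rfl⟩, rfl⟩, rfl⟩, rfl⟩ := hmem
      rw [combo1_eq] at hrank ⊢
      have key := fun p q => minor_eq_zero hrank p q
      have hb : b = 0 := by
        have h1 := key ![0,2,4] ![2,4,5]
        rw [Matrix.det_fin_three] at h1
        simp only [Matrix.submatrix_apply, Matrix.of_apply, ev6_0, ev6_1, ev6_2, ev6_3, ev6_4,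
          ev6_5, ev3_0, ev3_1, ev3_2] at h1
        have : b ^ 3 = 0 := by linear_combination h1
        exact pow_eq_zero_iff (by norm_num) |>.mp this
      have hc : c = 0 := by
        have h1 := key ![1,2,3] ![2,3,5]
        rw [Matrix.det_fin_three] at h1
        simp only [Matrix.submatrix_apply, Matrix.of_apply, ev6_0, ev6_1, ev6_2, ev6_3, ev6_4,
          ev6_5, ev3_0, ev3_1, ev3_2] at h1
        have : c ^ 3 = 0 := by linear_combination h1
        exact pow_eq_zero_iff (by norm_num) |>.mp this
      have hE : d * f - a * a = 0 := by
        by_contra hE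
        have h1 := key ![0,1,3] ![0,1,4]
        have h2 := key ![0,3,4] ![1,3,4]
        have h3 := key ![0,1,3] ![0,3,4]
        rw [Matrix.det_fin_three] at h1 h2 h3
        simp only [Matrix.submatrix_apply, Matrix.of_apply, ev6_0, ev6_1, ev6_2, ev6_3, ev6_4,
          ev6_5, ev3_0, ev3_1, ev3_2] at h1 h2 h3
        have hd : d * (d * f - a * a) = 0 := by linear_combination h1
        have hf : f * (d * f - a * a) = 0 := by linear_combination h2
        have ha : a * (d * f - a * a) = 0 := by linear_combination h3
        have hd0 : d = 0 := (mul_eq_zero.mp hd).resolve_right hE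
        have hf0 : f = 0 := (mul_eq_zero.mp hf).resolve_right hE
        have ha0 : a = 0 := (mul_eq_zero.mp ha).resolve_right hE
        exact hE (by rw [hd0, hf0, ha0]; ring)
      subst hb hc
      by_cases hd : d = 0
      · have ha : a = 0 := by
          have : a * a = 0 := by linear_combination -hE + f * hd
          exact mul_self_eq_zero.mp this
        refine ⟨f, 0, 1, ?_⟩
        rw [param_expand, ← combo1_eq]
        subst ha hd
        match_scalars <;> ring
      · refine ⟨d, 1, a / d, ?_⟩
        rw [param_expand, ← combo1_eq]
        match_scalars <;> field_simp
        · ring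
        · linear_combination hE
    · rintro ⟨l, t0, t1, rfl⟩
      constructor
      · rw [param_expand]
        exact Submodule.add_mem _ (Submodule.smul_mem _ _ (Submodule.subset_span (by simp)))
          (Submodule.add_mem _ (Submodule.smul_mem _ _ (Submodule.subset_span (by simp)))
            (Submodule.smul_mem _ _ (Submodule.subset_span (by simp))))
      · rw [← wedge_smul_left]
        exact rank_wedge_le _ _
  · -- Part 2
    have hL1le : Submodule.span ℂ
        {wedge (e 0 - e 4) (e 1 + e 3), wedge (e 0 - e 4) (e 2 + e 5)} ≤ A2 := by
      rw [Submodule.span_le]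
      rintro x (rfl | rfl)
      · exact Submodule.subset_span (by simp)
      · exact Submodule.subset_span (by simp)
    have hL2le : Submodule.span ℂ
        {wedge (e 0 + e 4) (e 1 - e 3), wedge (e 0 + e 4) (e 2 - e 5)} ≤ A2 := by
      rw [Submodule.span_le]
      rintro x (rfl | rfl)
      · simp only [SetLike.mem_coe]
        rw [p4_eq]
        exact Submodule.sub_mem _ (Submodule.subset_span (by simp))
          (Submodule.smul_mem _ _ (Submodule.subset_span (by simp)))
      · simp only [SetLike.mem_coe]
        rw [p5_eq]
        exact Submodule.sub_mem _ (Submodule.subset_span (by simp))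
          (Submodule.smul_mem _ _ (Submodule.subset_span (by simp)))
    refine ⟨Submodule.span ℂ {wedge (e 0 - e 4) (e 1 + e 3), wedge (e 0 - e 4) (e 2 + e 5)},
      Submodule.span ℂ {wedge (e 0 + e 4) (e 1 - e 3), wedge (e 0 + e 4) (e 2 - e 5)},
      hL1le, hL2le, span_pair_finrank lin_indep_pair_n, span_pair_finrank lin_indep_pair_p,
      ?_, ?_⟩
    · rw [Submodule.eq_bot_iff]
      intro x hx
      obtain ⟨h1, h2⟩ := Submodule.mem_inf.mp hx
      rw [Submodule.mem_span_pair] at h1 h2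
      obtain ⟨s, t, rfl⟩ := h1
      obtain ⟨u, v, huv⟩ := h2
      have e01 := congrFun (congrFun huv 0) 1
      have e03 := congrFun (congrFun huv 0) 3
      have e02 := congrFun (congrFun huv 0) 2
      have e05 := congrFun (congrFun huv 0) 5
      simp [wedge, vecMulVec_apply, e, Pi.single_apply] at e01 e03 e02 e05
      have hs : s = 0 := by linear_combination -(e01 + e03) / 2
      have ht : t = 0 := by linear_combination -(e02 + e05) / 2
      rw [hs, ht]
      simp
    · ext M
      simp only [Set.mem_setOf_eq, Set.mem_union, SetLike.mem_coe]
      constructor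
      · rintro ⟨hmem, hrank⟩
        simp only [A2, Submodule.mem_span_insert, Submodule.mem_span_singleton] at hmem
        obtain ⟨a, _, ⟨b, _, ⟨c, _, ⟨d, _, ⟨f, rfl⟩, rfl⟩, rfl⟩, rfl⟩, rfl⟩ := hmem
        rw [combo2_eq] at hrank
        have key := fun p q => minor_eq_zero hrank p q
        have hc : c = 0 := by
          have h1 := key ![1,2,3] ![2,3,5]
          rw [Matrix.det_fin_three] at h1
          simp only [Matrix.submatrix_apply, Matrix.of_apply, ev6_0, ev6_1, ev6_2, ev6_3, ev6_4,
            ev6_5, ev3_0, ev3_1, ev3_2] at h1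
          have : c ^ 3 = 0 := by linear_combination h1
          exact pow_eq_zero_iff (by norm_num) |>.mp this
        have hA : a = 0 ∨ a = -(2*d) := by
          have h1 := key ![0,1,3] ![0,1,4]
          have h3 := key ![0,1,3] ![0,3,4]
          rw [Matrix.det_fin_three] at h1 h3
          simp only [Matrix.submatrix_apply, Matrix.of_apply, ev6_0, ev6_1, ev6_2, ev6_3, ev6_4,
            ev6_5, ev3_0, ev3_1, ev3_2] at h1 h3
          have h : a * a * (a + 2*d) = 0 := by linear_combination h1 - h3
          rcases mul_eq_zero.mp h with h | h
          · exact Or.inl (mul_self_eq_zero.mp h)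
          · exact Or.inr (by linear_combination h)
        have hB : b = 0 ∨ b = -(2*f) := by
          have h1 := key ![0,2,4] ![0,2,5]
          have h3 := key ![0,2,4] ![2,4,5]
          rw [Matrix.det_fin_three] at h1 h3
          simp only [Matrix.submatrix_apply, Matrix.of_apply, ev6_0, ev6_1, ev6_2, ev6_3, ev6_4,
            ev6_5, ev3_0, ev3_1, ev3_2] at h1 h3
          have h : b * b * (b + 2*f) = 0 := by linear_combination h3 - h1
          rcases mul_eq_zero.mp h with h | h
          · exact Or.inl (mul_self_eq_zero.mp h)
          · exact Or.inr (by linear_combination h)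
        have hE0 : b*d - a*f = 0 := by
          by_contra hE
          have r1 := key ![0,1,2] ![0,1,4]
          have r2 := key ![0,1,2] ![0,2,4]
          have r3 := key ![0,1,2] ![0,3,4]
          have r4 := key ![0,1,2] ![0,4,5]
          rw [Matrix.det_fin_three] at r1 r2 r3 r4
          simp only [Matrix.submatrix_apply, Matrix.of_apply, ev6_0, ev6_1, ev6_2, ev6_3, ev6_4,
            ev6_5, ev3_0, ev3_1, ev3_2] at r1 r2 r3 r4
          have hd0 : d * (b*d - a*f) = 0 := by linear_combination r1
          have hf0 : f * (b*d - a*f) = 0 := by linear_combination r2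
          have ha0 : a * (b*d - a*f) = 0 := by linear_combination r3 - r1
          have hb0 : b * (b*d - a*f) = 0 := by linear_combination -r4 - r2
          have hd' : d = 0 := (mul_eq_zero.mp hd0).resolve_right hE
          have hf' : f = 0 := (mul_eq_zero.mp hf0).resolve_right hE
          have ha' : a = 0 := (mul_eq_zero.mp ha0).resolve_right hE
          have hb' : b = 0 := (mul_eq_zero.mp hb0).resolve_right hE
          exact hE (by rw [hd', hf', ha', hb']; ring)
        subst hc
        rcases hA with ha | ha <;> rcases hB with hb | hb
        · subst ha hb
          left
          rw [Submodule.mem_span_pair]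
          exact ⟨d, f, by match_scalars <;> ring⟩
        · subst ha; subst hb
          have hfd : f * d = 0 := by linear_combination -hE0 / 2
          rcases mul_eq_zero.mp hfd with h | h
          · subst h
            left
            rw [Submodule.mem_span_pair]
            exact ⟨d, 0, by match_scalars <;> ring⟩
          · subst h
            right
            rw [Submodule.mem_span_pair]
            refine ⟨0, f, ?_⟩
            rw [p4_eq, p5_eq]
            match_scalars <;> ring
        · subst ha; subst hb
          have hdf : d * f = 0 := by linear_combination hE0 / 2
          rcases mul_eq_zero.mp hdf with h | h
          · subst h
            left
            rw [Submodule.mem_span_pair]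
            exact ⟨0, f, by match_scalars <;> ring⟩
          · subst h
            right
            rw [Submodule.mem_span_pair]
            refine ⟨d, 0, ?_⟩
            rw [p4_eq, p5_eq]
            match_scalars <;> ring
        · subst ha; subst hb
          right
          rw [Submodule.mem_span_pair]
          refine ⟨d, f, ?_⟩
          rw [p4_eq, p5_eq]
          match_scalars <;> ring
      · rintro (h | h) <;> rw [Submodule.mem_span_pair] at h <;> obtain ⟨s, t, rfl⟩ := h
        · refine ⟨hL1le (Submodule.mem_span_pair.mpr ⟨s, t, rfl⟩), ?_⟩
          rw [L1elt]
          exact rank_wedge_le _ _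
        · refine ⟨hL2le (Submodule.mem_span_pair.mpr ⟨s, t, rfl⟩), ?_⟩
          rw [L2elt]
          exact rank_wedge_le _ _
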